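/- Let p_1, …, p_m in [0,1], nonnegative reals R̂_1, …, R̂_m, λ in [0,1]^m, and q in (0,1). Fix j in [m] with j in S(λ), and let λ' agree with λ in every coordinate except λ'_j = 0. Then r*(λ') = r*(λ) and S(λ') = S(λ); that is, once j is selected, sending its pruning value to 0 does not change the pruned selection set. -/
import Mathlib


/-- The pruning threshold `r*(λ) = max{r ∈ {0,…,m} : #{j : p_j ≤ q·R̂_j/m and λ_j·R̂_j ≤ r} ≥ r}`. -/
noncomputable def prunedThreshold (m : ℕ) (q : ℝ) (p R lam : Fin m → ℝ) : ℕ :=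
  Nat.findGreatest
    (fun r => r ≤ Set.ncard {j : Fin m | p j ≤ q * R j / m ∧ lam j * R j ≤ (r : ℝ)}) m

/-- The pruned selection set `S(λ) = {j : p_j ≤ q·R̂_j/m and λ_j·R̂_j ≤ r*(λ)}`. -/
noncomputable def prunedSet (m : ℕ) (q : ℝ) (p R lam : Fin m → ℝ) : Set (Fin m) :=
  {j : Fin m | p j ≤ q * R j / m ∧ lam j * R j ≤ (prunedThreshold m q p R lam : ℝ)}

/-- The BH index `r*_BH = max{r ∈ {0,…,m} : #{j : p_j ≤ q·r/m} ≥ r}`. -/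
noncomputable def bhThreshold (m : ℕ) (q : ℝ) (p : Fin m → ℝ) : ℕ :=
  Nat.findGreatest (fun r => r ≤ Set.ncard {j : Fin m | p j ≤ q * (r : ℝ) / m}) m

/-- The BH selection set `S_BH = {j : p_j ≤ q·r*_BH/m}`. -/
noncomputable def bhSet (m : ℕ) (q : ℝ) (p : Fin m → ℝ) : Set (Fin m) :=
  {j : Fin m | p j ≤ q * (bhThreshold m q p : ℝ) / m}

/-- If j is selected by the pruned procedure, then sending its pruning value
to 0 changes neither the pruning threshold nor the pruned selection set:
r*(λ') = r*(λ) and S(λ') = S(λ), where λ' = λ except λ'_j = 0. -/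
theorem pruned_stable_under_zeroing_selected
    (m : ℕ) (q : ℝ) (hq : q ∈ Set.Ioo (0 : ℝ) 1)
    (p : Fin m → ℝ) (hp : ∀ j, p j ∈ Set.Icc (0 : ℝ) 1)
    (R : Fin m → ℝ) (hR : ∀ j, 0 ≤ R j)
    (lam : Fin m → ℝ) (hlam : ∀ j, lam j ∈ Set.Icc (0 : ℝ) 1)
    (j : Fin m) (hj : j ∈ prunedSet m q p R lam) :
    prunedThreshold m q p R (Function.update lam j 0) = prunedThreshold m q p R lam ∧
      prunedSet m q p R (Function.update lam j 0) = prunedSet m q p R lam := by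
  obtain ⟨hpj, hlj⟩ := hj
  have hcast : ∀ r : ℕ, (0:ℝ) ≤ (r:ℝ) := fun r => Nat.cast_nonneg r
  set P : ℕ → Prop := fun r =>
    r ≤ Set.ncard {i : Fin m | p i ≤ q * R i / m ∧ lam i * R i ≤ (r : ℝ)} with hP
  set P' : ℕ → Prop := fun r =>
    r ≤ Set.ncard {i : Fin m | p i ≤ q * R i / m ∧ Function.update lam j 0 i * R i ≤ (r : ℝ)}
    with hP'
  have hsub : ∀ r : ℕ, {i : Fin m | p i ≤ q * R i / m ∧ lam i * R i ≤ (r:ℝ)} ⊆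
      {i : Fin m | p i ≤ q * R i / m ∧ Function.update lam j 0 i * R i ≤ (r:ℝ)} := by
    intro r i hi
    by_cases hij : i = j
    · subst hij
      exact ⟨hi.1, by simp [Function.update_self]⟩
    · exact ⟨hi.1, by simpa [Function.update_of_ne hij] using hi.2⟩
  have hmono : ∀ r : ℕ, P r → P' r := fun r hr =>
    hr.trans (Set.ncard_le_ncard (hsub r) (Set.toFinite _))
  have hP0 : P 0 := Nat.zero_le _
  have ht := prunedThreshold m q p R lam
  have htm : prunedThreshold m q p R lam ≤ m := Nat.findGreatest_le m
  have hPt : P (prunedThreshold m q p R lam) :=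
    Nat.findGreatest_spec (Nat.zero_le m) hP0
  -- t ≤ t'
  have h1 : prunedThreshold m q p R lam ≤ prunedThreshold m q p R (Function.update lam j 0) :=
    Nat.le_findGreatest htm (hmono _ hPt)
  -- t' ≤ t
  have h2 : prunedThreshold m q p R (Function.update lam j 0) ≤ prunedThreshold m q p R lam := by
    by_contra hcon
    push_neg at hcon
    set t' := prunedThreshold m q p R (Function.update lam j 0) with ht'
    have hP't' : P' t' := Nat.findGreatest_spec (Nat.zero_le m) (hmono 0 hP0)
    have hjt' : lam j * R j ≤ (t' : ℝ) := hlj.trans (by exact_mod_cast hcon.le)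
    have hseteq : {i : Fin m | p i ≤ q * R i / m ∧ Function.update lam j 0 i * R i ≤ (t':ℝ)}
        = {i : Fin m | p i ≤ q * R i / m ∧ lam i * R i ≤ (t':ℝ)} := by
      ext i
      by_cases hij : i = j
      · subst hij
        simp only [Set.mem_setOf_eq, Function.update_self]
        constructor
        · rintro ⟨h1, _⟩; exact ⟨h1, hjt'⟩
        · rintro ⟨h1, _⟩; exact ⟨h1, by simp⟩
      · simp [Function.update_of_ne hij]
    have hPt' : P t' := by
      show t' ≤ Set.ncard _
      rw [← hseteq]
      exact hP't'
    have : t' ≤ prunedThreshold m q p R lam :=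
      Nat.le_findGreatest (Nat.findGreatest_le m) hPt'
    exact absurd this (not_le.mpr hcon)
  have hthr : prunedThreshold m q p R (Function.update lam j 0) = prunedThreshold m q p R lam :=
    le_antisymm h2 h1
  refine ⟨hthr, ?_⟩
  unfold prunedSet
  rw [hthr]
  ext i
  by_cases hij : i = j
  · subst hij
    simp only [Set.mem_setOf_eq, Function.update_self]
    exact ⟨fun ⟨h1, _⟩ => ⟨h1, hlj⟩, fun ⟨h1, _⟩ => ⟨h1, by simp⟩⟩
  · simp [Function.update_of_ne hij]
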